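/- The map Ξ(a₃,n₃;a₄,n₄) from ℝ^{d+1} × ℝ^{d+1} to ℝ^{d+1} × ℝ^{d+1} defined (for fixed parameters a₁,n₁,m₁,t₁,a₂,n₂,m₂,t₂) by Ξ = (t₁ − sinh(2a₄−2a₂)e^{2a₁}, m₁ − (1/2)sinh(2a₄−2a₂)e^{2a₁}n₃ − cosh(a₃−a₁)cosh(a₄−a₂)e^{a₁+a₂}(n₄−n₂); t₂ + sinh(2a₃−2a₁)e^{2a₂}, m₂ + (1/2)sinh(2a₃−2a₁)e^{2a₂}n₄ + cosh(a₃−a₁)cosh(a₄−a₂)e^{a₁+a₂}(n₃−n₁)) has Jacobian determinant (up to sign) equal to 4 e^{(2d+2)(a₁+a₂)} (cosh(a₃−a₁)cosh(a₄−a₂)cosh(a₃−a₁−a₄+a₂))^d cosh(2a₃−2a₁)cosh(2a₄−2a₂). -/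

import Mathlib

open Real
noncomputable section

/-- The map Ξ : Q × Q → P × P (for fixed parameters), in coordinates ((a₃,n₃),(a₄,n₄)). -/
def Xi (d : ℕ) (a₁ a₂ t₁ t₂ : ℝ) (n₁ n₂ m₁ m₂ : Fin d → ℝ)
    (x : (ℝ × (Fin d → ℝ)) × (ℝ × (Fin d → ℝ))) : (ℝ × (Fin d → ℝ)) × (ℝ × (Fin d → ℝ)) :=
  ((t₁ - Real.sinh (2 * x.2.1 - 2 * a₂) * Real.exp (2 * a₁),
    fun i => m₁ i - (1/2) * Real.sinh (2 * x.2.1 - 2 * a₂) * Real.exp (2 * a₁) * x.1.2 i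
      - Real.cosh (x.1.1 - a₁) * Real.cosh (x.2.1 - a₂) * Real.exp (a₁ + a₂) *
        (x.2.2 i - n₂ i)),
   (t₂ + Real.sinh (2 * x.1.1 - 2 * a₁) * Real.exp (2 * a₂),
    fun i => m₂ i + (1/2) * Real.sinh (2 * x.1.1 - 2 * a₁) * Real.exp (2 * a₂) * x.2.2 i
      + Real.cosh (x.1.1 - a₁) * Real.cosh (x.2.1 - a₂) * Real.exp (a₁ + a₂) *
        (x.1.2 i - n₁ i)))

abbrev Vv (d : ℕ) := Fin d → ℝ
abbrev Ee (d : ℕ) := (ℝ × Vv d) × (ℝ × Vv d)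

def X3 (d : ℕ) : Ee d →L[ℝ] ℝ :=
  (ContinuousLinearMap.fst ℝ ℝ (Vv d)).comp (ContinuousLinearMap.fst ℝ (ℝ × Vv d) (ℝ × Vv d))
def X4 (d : ℕ) : Ee d →L[ℝ] ℝ :=
  (ContinuousLinearMap.fst ℝ ℝ (Vv d)).comp (ContinuousLinearMap.snd ℝ (ℝ × Vv d) (ℝ × Vv d))
def Y3 (d : ℕ) (i : Fin d) : Ee d →L[ℝ] ℝ :=
  (ContinuousLinearMap.proj i).comp
    ((ContinuousLinearMap.snd ℝ ℝ (Vv d)).comp (ContinuousLinearMap.fst ℝ (ℝ × Vv d) (ℝ × Vv d)))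
def Y4 (d : ℕ) (i : Fin d) : Ee d →L[ℝ] ℝ :=
  (ContinuousLinearMap.proj i).comp
    ((ContinuousLinearMap.snd ℝ ℝ (Vv d)).comp (ContinuousLinearMap.snd ℝ (ℝ × Vv d) (ℝ × Vv d)))

/-- The candidate derivative of `Xi`, with abstract coefficients. -/
def Lmap (d : ℕ) (Bc s c p q A s' : ℝ) (n₁ n₂ n₃ n₄ : Vv d) : Ee d →L[ℝ] Ee d :=
  (((-Bc) • X4 d).prod (ContinuousLinearMap.pi fun i =>
      (-(Bc / 2 * n₃ i)) • X4 d + (-s) • Y3 d i + (-(p * (n₄ i - n₂ i))) • X3 d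
        + (-(q * (n₄ i - n₂ i))) • X4 d + (-c) • Y4 d i)).prod
  ((A • X3 d).prod (ContinuousLinearMap.pi fun i =>
      (A / 2 * n₄ i) • X3 d + s' • Y4 d i + (p * (n₃ i - n₁ i)) • X3 d
        + (q * (n₃ i - n₁ i)) • X4 d + c • Y3 d i))

def bE (d : ℕ) : Module.Basis ((Unit ⊕ Fin d) ⊕ (Unit ⊕ Fin d)) ℝ (Ee d) :=
  ((Module.Basis.singleton Unit ℝ).prod (Pi.basisFun ℝ (Fin d))).prod
    ((Module.Basis.singleton Unit ℝ).prod (Pi.basisFun ℝ (Fin d)))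

def sumFinEquiv (n : ℕ) : (Fin n ⊕ Fin n) ≃ (Fin 2 × Fin n) where
  toFun := Sum.elim (fun j => (0, j)) (fun j => (1, j))
  invFun p := if p.1 = 0 then Sum.inl p.2 else Sum.inr p.2
  left_inv x := by rcases x with j | j <;> simp
  right_inv p := by
    rcases p with ⟨i, j⟩
    fin_cases i <;> simp

open Matrix Kronecker in
theorem det_fromBlocks_smul_one (n : ℕ) (a b c d : ℝ) :
    (Matrix.fromBlocks (a • 1) (b • 1) (c • 1) (d • 1) :
      Matrix (Fin n ⊕ Fin n) (Fin n ⊕ Fin n) ℝ).det = (a * d - b * c) ^ n := by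
  have h : (Matrix.fromBlocks (a • 1) (b • 1) (c • 1) (d • 1) :
      Matrix (Fin n ⊕ Fin n) (Fin n ⊕ Fin n) ℝ)
      = (!![a, b; c, d] ⊗ₖ (1 : Matrix (Fin n) (Fin n) ℝ)).submatrix
          (sumFinEquiv n) (sumFinEquiv n) := by
    ext i j
    rcases i with i | i <;> rcases j with j | j <;>
      simp [sumFinEquiv, Matrix.one_apply, Pi.single_apply]
  rw [h, Matrix.det_submatrix_equiv_self, Matrix.det_kronecker]
  simp [Matrix.det_fin_two_of]

set_option maxHeartbeats 2000000 in
theorem Lmap_det (d : ℕ) (Bc s c p q A s' : ℝ) (n₁ n₂ n₃ n₄ : Vv d) :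
    (Lmap d Bc s c p q A s' n₁ n₂ n₃ n₄).det = A * Bc * (c * c - s * s') ^ d := by
  have hdet : (Lmap d Bc s c p q A s' n₁ n₂ n₃ n₄).det
      = (LinearMap.toMatrix (bE d) (bE d)
          (Lmap d Bc s c p q A s' n₁ n₂ n₃ n₄ : Ee d →ₗ[ℝ] Ee d)).det := by
    rw [ContinuousLinearMap.det, ← LinearMap.det_toMatrix (bE d)]
  have h1 : (LinearMap.toMatrix (bE d) (bE d)
          (Lmap d Bc s c p q A s' n₁ n₂ n₃ n₄ : Ee d →ₗ[ℝ] Ee d)).det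
      = ((LinearMap.toMatrix (bE d) (bE d)
          (Lmap d Bc s c p q A s' n₁ n₂ n₃ n₄ : Ee d →ₗ[ℝ] Ee d)).submatrix
          (Equiv.sumSumSumComm Unit (Fin d) Unit (Fin d)).symm
          (Equiv.sumSumSumComm Unit (Fin d) Unit (Fin d)).symm).det :=
    (Matrix.det_submatrix_equiv_self _ _).symm
  have h2 : ((LinearMap.toMatrix (bE d) (bE d)
          (Lmap d Bc s c p q A s' n₁ n₂ n₃ n₄ : Ee d →ₗ[ℝ] Ee d)).submatrix
          (Equiv.sumSumSumComm Unit (Fin d) Unit (Fin d)).symm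
          (Equiv.sumSumSumComm Unit (Fin d) Unit (Fin d)).symm)
      = Matrix.fromBlocks
          (Matrix.fromBlocks (Matrix.of fun _ _ => 0) (Matrix.of fun _ _ => -Bc)
            (Matrix.of fun _ _ => A) (Matrix.of fun _ _ => 0))
          0
          (((LinearMap.toMatrix (bE d) (bE d)
          (Lmap d Bc s c p q A s' n₁ n₂ n₃ n₄ : Ee d →ₗ[ℝ] Ee d)).submatrix
          (Equiv.sumSumSumComm Unit (Fin d) Unit (Fin d)).symm
          (Equiv.sumSumSumComm Unit (Fin d) Unit (Fin d)).symm).toBlocks₂₁)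
          (Matrix.fromBlocks ((-s) • 1) ((-c) • 1) (c • 1) (s' • 1)) := by
    ext i j
    rcases i with (u | i) | (u | i) <;> rcases j with (v | j) | (v | j) <;>
      simp [Matrix.toBlocks₂₁, LinearMap.toMatrix_apply, bE, Module.Basis.prod_apply,
        Module.Basis.prod_repr_inl, Module.Basis.prod_repr_inr, Module.Basis.singleton_repr, Pi.basisFun_repr,
        Pi.basisFun_apply, Lmap, X3, X4, Y3, Y4, Matrix.one_apply, Pi.single_apply] <;>
      split_ifs <;> ring
  have h3 : (Matrix.fromBlocks (Matrix.of fun _ _ => (0:ℝ)) (Matrix.of fun _ _ => -Bc)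
            (Matrix.of fun _ _ => A) (Matrix.of fun _ _ => 0) :
            Matrix (Unit ⊕ Unit) (Unit ⊕ Unit) ℝ).det = A * Bc := by
    let e2 : (Unit ⊕ Unit) ≃ Fin 2 :=
      ⟨Sum.elim (fun _ => 0) (fun _ => 1), fun i => if i = 0 then .inl () else .inr (),
        fun x => by rcases x with ⟨⟩ | ⟨⟩ <;> simp,
        fun i => by fin_cases i <;> simp⟩
    rw [← Matrix.det_submatrix_equiv_self e2.symm, Matrix.det_fin_two]
    simp [e2]
    ring
  rw [hdet, h1, h2, Matrix.det_fromBlocks_zero₁₂, det_fromBlocks_smul_one, h3]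
  ring_nf

set_option maxHeartbeats 1000000 in
theorem Xi_hasFDerivAt (d : ℕ) (a₁ a₂ t₁ t₂ : ℝ) (n₁ n₂ m₁ m₂ : Fin d → ℝ)
    (a₃ a₄ : ℝ) (n₃ n₄ : Fin d → ℝ) :
    HasFDerivAt (Xi d a₁ a₂ t₁ t₂ n₁ n₂ m₁ m₂)
      (Lmap d (2 * Real.cosh (2 * a₄ - 2 * a₂) * Real.exp (2 * a₁))
        (1/2 * Real.sinh (2 * a₄ - 2 * a₂) * Real.exp (2 * a₁))
        (Real.cosh (a₃ - a₁) * Real.cosh (a₄ - a₂) * Real.exp (a₁ + a₂))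
        (Real.sinh (a₃ - a₁) * Real.cosh (a₄ - a₂) * Real.exp (a₁ + a₂))
        (Real.cosh (a₃ - a₁) * Real.sinh (a₄ - a₂) * Real.exp (a₁ + a₂))
        (2 * Real.cosh (2 * a₃ - 2 * a₁) * Real.exp (2 * a₂))
        (1/2 * Real.sinh (2 * a₃ - 2 * a₁) * Real.exp (2 * a₂)) n₁ n₂ n₃ n₄)
      ((a₃, n₃), (a₄, n₄)) := by
  have hX3 : HasFDerivAt (fun w : Ee d => w.1.1) (X3 d) (((a₃, n₃), (a₄, n₄)) : Ee d) :=
    hasFDerivAt_fst.comp (((a₃, n₃), (a₄, n₄)) : Ee d) hasFDerivAt_fst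
  have hX4 : HasFDerivAt (fun w : Ee d => w.2.1) (X4 d) (((a₃, n₃), (a₄, n₄)) : Ee d) :=
    hasFDerivAt_fst.comp (((a₃, n₃), (a₄, n₄)) : Ee d) hasFDerivAt_snd
  have hY3 : ∀ i, HasFDerivAt (fun w : Ee d => w.1.2 i) (Y3 d i)
      (((a₃, n₃), (a₄, n₄)) : Ee d) := fun i =>
    (Y3 d i).hasFDerivAt
  have hY4 : ∀ i, HasFDerivAt (fun w : Ee d => w.2.2 i) (Y4 d i)
      (((a₃, n₃), (a₄, n₄)) : Ee d) := fun i =>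
    (Y4 d i).hasFDerivAt
  have hF1 : HasFDerivAt (fun w : Ee d => t₁ - Real.sinh (2 * w.2.1 - 2 * a₂) * Real.exp (2 * a₁))
      ((-(2 * Real.cosh (2 * a₄ - 2 * a₂) * Real.exp (2 * a₁))) • X4 d)
      (((a₃, n₃), (a₄, n₄)) : Ee d) :=
    ((((hX4.const_mul 2).sub_const (2 * a₂)).sinh.mul_const (Real.exp (2 * a₁))).const_sub
      t₁).congr_fderiv (by refine ContinuousLinearMap.ext fun w => ?_; simp [X3, X4, Y3, Y4]; ring)
  have hF2 : HasFDerivAt (fun w : Ee d => t₂ + Real.sinh (2 * w.1.1 - 2 * a₁) * Real.exp (2 * a₂))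
      ((2 * Real.cosh (2 * a₃ - 2 * a₁) * Real.exp (2 * a₂)) • X3 d)
      (((a₃, n₃), (a₄, n₄)) : Ee d) :=
    ((((hX3.const_mul 2).sub_const (2 * a₁)).sinh.mul_const (Real.exp (2 * a₂))).const_add
      t₂).congr_fderiv (by refine ContinuousLinearMap.ext fun w => ?_; simp [X3, X4, Y3, Y4]; ring)
  have hG1 : ∀ i, HasFDerivAt (fun w : Ee d =>
      m₁ i - 1/2 * Real.sinh (2 * w.2.1 - 2 * a₂) * Real.exp (2 * a₁) * w.1.2 i
        - Real.cosh (w.1.1 - a₁) * Real.cosh (w.2.1 - a₂) * Real.exp (a₁ + a₂) *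
          (w.2.2 i - n₂ i))
      ((-((2 * Real.cosh (2 * a₄ - 2 * a₂) * Real.exp (2 * a₁)) / 2 * n₃ i)) • X4 d
        + (-(1/2 * Real.sinh (2 * a₄ - 2 * a₂) * Real.exp (2 * a₁))) • Y3 d i
        + (-(Real.sinh (a₃ - a₁) * Real.cosh (a₄ - a₂) * Real.exp (a₁ + a₂) * (n₄ i - n₂ i))) • X3 d
        + (-(Real.cosh (a₃ - a₁) * Real.sinh (a₄ - a₂) * Real.exp (a₁ + a₂) * (n₄ i - n₂ i))) • X4 d
        + (-(Real.cosh (a₃ - a₁) * Real.cosh (a₄ - a₂) * Real.exp (a₁ + a₂))) • Y4 d i)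
      (((a₃, n₃), (a₄, n₄)) : Ee d) := by
    intro i
    have t1 := ((((hX4.const_mul 2).sub_const (2 * a₂)).sinh.const_mul (1/2)).mul_const
      (Real.exp (2 * a₁))).mul (hY3 i)
    have t2 := (((((hX3.sub_const a₁).cosh.mul ((hX4.sub_const a₂).cosh)).mul_const
      (Real.exp (a₁ + a₂)))).mul ((hY4 i).sub_const (n₂ i)))
    exact ((t1.const_sub (m₁ i)).sub t2).congr_fderiv
      (by refine ContinuousLinearMap.ext fun w => ?_; simp [X3, X4, Y3, Y4]; ring)
  have hG2 : ∀ i, HasFDerivAt (fun w : Ee d =>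
      m₂ i + 1/2 * Real.sinh (2 * w.1.1 - 2 * a₁) * Real.exp (2 * a₂) * w.2.2 i
        + Real.cosh (w.1.1 - a₁) * Real.cosh (w.2.1 - a₂) * Real.exp (a₁ + a₂) *
          (w.1.2 i - n₁ i))
      (((2 * Real.cosh (2 * a₃ - 2 * a₁) * Real.exp (2 * a₂)) / 2 * n₄ i) • X3 d
        + (1/2 * Real.sinh (2 * a₃ - 2 * a₁) * Real.exp (2 * a₂)) • Y4 d i
        + (Real.sinh (a₃ - a₁) * Real.cosh (a₄ - a₂) * Real.exp (a₁ + a₂) * (n₃ i - n₁ i)) • X3 d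
        + (Real.cosh (a₃ - a₁) * Real.sinh (a₄ - a₂) * Real.exp (a₁ + a₂) * (n₃ i - n₁ i)) • X4 d
        + (Real.cosh (a₃ - a₁) * Real.cosh (a₄ - a₂) * Real.exp (a₁ + a₂)) • Y3 d i)
      (((a₃, n₃), (a₄, n₄)) : Ee d) := by
    intro i
    have t1 := ((((hX3.const_mul 2).sub_const (2 * a₁)).sinh.const_mul (1/2)).mul_const
      (Real.exp (2 * a₂))).mul (hY4 i)
    have t2 := (((((hX3.sub_const a₁).cosh.mul ((hX4.sub_const a₂).cosh)).mul_const
      (Real.exp (a₁ + a₂)))).mul ((hY3 i).sub_const (n₁ i)))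
    exact ((t1.const_add (m₂ i)).add t2).congr_fderiv
      (by refine ContinuousLinearMap.ext fun w => ?_; simp [X3, X4, Y3, Y4]; ring)
  exact HasFDerivAt.prodMk (HasFDerivAt.prodMk hF1 (hasFDerivAt_pi.2 hG1))
    (HasFDerivAt.prodMk hF2 (hasFDerivAt_pi.2 hG2))

theorem Xi_jacobian (d : ℕ) (a₁ a₂ t₁ t₂ : ℝ) (n₁ n₂ m₁ m₂ : Fin d → ℝ)
    (a₃ a₄ : ℝ) (n₃ n₄ : Fin d → ℝ) :
    |(fderiv ℝ (Xi d a₁ a₂ t₁ t₂ n₁ n₂ m₁ m₂) ((a₃, n₃), (a₄, n₄))).det|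
      = 4 * Real.exp ((2 * (d : ℝ) + 2) * (a₁ + a₂)) *
          (Real.cosh (a₃ - a₁) * Real.cosh (a₄ - a₂) * Real.cosh (a₃ - a₁ - a₄ + a₂)) ^ d *
          Real.cosh (2 * a₃ - 2 * a₁) * Real.cosh (2 * a₄ - 2 * a₂) := by
  rw [(Xi_hasFDerivAt d a₁ a₂ t₁ t₂ n₁ n₂ m₁ m₂ a₃ a₄ n₃ n₄).fderiv, Lmap_det]
  have h3 : Real.exp (2 * a₁) * Real.exp (2 * a₂)
      = Real.exp (a₁ + a₂) * Real.exp (a₁ + a₂) := by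
    rw [← Real.exp_add, ← Real.exp_add]; congr 1; ring
  have key : Real.cosh (a₃ - a₁) * Real.cosh (a₄ - a₂) * Real.exp (a₁ + a₂) *
        (Real.cosh (a₃ - a₁) * Real.cosh (a₄ - a₂) * Real.exp (a₁ + a₂))
      - 1/2 * Real.sinh (2 * a₄ - 2 * a₂) * Real.exp (2 * a₁) *
        (1/2 * Real.sinh (2 * a₃ - 2 * a₁) * Real.exp (2 * a₂))
      = Real.exp (a₁ + a₂) * Real.exp (a₁ + a₂) *
        (Real.cosh (a₃ - a₁) * Real.cosh (a₄ - a₂) * Real.cosh (a₃ - a₁ - a₄ + a₂)) := by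
    have h1s : Real.sinh (2 * a₃ - 2 * a₁)
        = 2 * Real.sinh (a₃ - a₁) * Real.cosh (a₃ - a₁) := by
      rw [show (2 * a₃ - 2 * a₁ : ℝ) = 2 * (a₃ - a₁) by ring, Real.sinh_two_mul]
    have h2s : Real.sinh (2 * a₄ - 2 * a₂)
        = 2 * Real.sinh (a₄ - a₂) * Real.cosh (a₄ - a₂) := by
      rw [show (2 * a₄ - 2 * a₂ : ℝ) = 2 * (a₄ - a₂) by ring, Real.sinh_two_mul]
    have hc : Real.cosh (a₃ - a₁ - a₄ + a₂)
        = Real.cosh (a₃ - a₁) * Real.cosh (a₄ - a₂)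
          - Real.sinh (a₃ - a₁) * Real.sinh (a₄ - a₂) := by
      rw [show (a₃ - a₁ - a₄ + a₂ : ℝ) = (a₃ - a₁) - (a₄ - a₂) by ring, Real.cosh_sub]
    rw [h1s, h2s, hc]
    linear_combination (-(Real.sinh (a₃ - a₁) * Real.cosh (a₃ - a₁) *
      Real.sinh (a₄ - a₂) * Real.cosh (a₄ - a₂))) * h3
  rw [key]
  rw [abs_of_pos (by positivity)]
  have hE : Real.exp ((2 * (d : ℝ) + 2) * (a₁ + a₂))
      = (Real.exp (a₁ + a₂) * Real.exp (a₁ + a₂)) ^ d * (Real.exp (2 * a₂) * Real.exp (2 * a₁)) := by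
    rw [show ((2 * (d : ℝ) + 2) * (a₁ + a₂))
        = (d : ℕ) * ((a₁ + a₂) + (a₁ + a₂)) + (2 * a₂ + 2 * a₁) by push_cast; ring,
      Real.exp_add, Real.exp_nat_mul, Real.exp_add, Real.exp_add, Real.exp_add]
  rw [hE]
  ring
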